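/- Let Y = {Y_t : t = 0, 1, 2, ...} be a stochastic process on a probability space (Ω, F, P) with values in {0,1} such that every trajectory t ↦ Y_t is nondecreasing. Fix t ≥ 0 and values y_0, ..., y_t in {0,1}, and suppose that P(Y_0 = y_0, ..., Y_{s} = y_{s}) > 0 for every s ≤ t - 1. Then the path probability factorizes through one-step transition probabilities: P(Y_0 = y_0, Y_1 = y_1, ..., Y_t = y_t) = P(Y_0 = y_0) · ∏_{s=1}^{t} P(Y_s = y_s | Y_{s-1} = y_{s-1}). -/

import Mathlib

open MeasureTheory

/-- Conditional probability `P(A | B) = P(A ∩ B) / P(B)`. -/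
noncomputable def condProb {Ω : Type*} [MeasurableSpace Ω]
    (P : Measure Ω) (A B : Set Ω) : ENNReal :=
  P (A ∩ B) / P B

lemma step_aux {Ω : Type*} [MeasurableSpace Ω] (P : Measure Ω) [IsProbabilityMeasure P]
    (Y : ℕ → Ω → ℕ)
    (hbin : ∀ t ω, Y t ω ≤ 1)
    (hmono : ∀ ω, Monotone fun t => Y t ω)
    (s : ℕ) (y : ℕ → ℕ) (hys : y s ≤ 1) (hys1 : y (s + 1) ≤ 1)
    (hpos : P (⋂ r ∈ Finset.range (s + 1), {ω | Y r ω = y r}) ≠ 0) :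
    P (⋂ r ∈ Finset.range (s + 2), {ω | Y r ω = y r}) =
      P (⋂ r ∈ Finset.range (s + 1), {ω | Y r ω = y r}) *
        condProb P {ω | Y (s + 1) ω = y (s + 1)} {ω | Y s ω = y s} := by
  have hsplit : (⋂ r ∈ Finset.range (s + 2), {ω | Y r ω = y r}) =
      {ω | Y (s + 1) ω = y (s + 1)} ∩ ⋂ r ∈ Finset.range (s + 1), {ω | Y r ω = y r} := by
    rw [Finset.range_add_one, Finset.set_biInter_insert]
  have hm : ∀ ω (a b : ℕ), a ≤ b → Y a ω ≤ Y b ω := fun ω a b h => hmono ω h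
  have hJA : (⋂ r ∈ Finset.range (s + 1), {ω | Y r ω = y r}) ⊆ {ω | Y s ω = y s} := by
    intro ω hω
    simp only [Set.mem_iInter, Finset.mem_range, Set.mem_setOf_eq] at hω
    exact hω s (Nat.lt_succ_self s)
  interval_cases h0 : y s
  · -- y s = 0 : the joint event up to s equals {Y s = 0}
    have hne : (⋂ r ∈ Finset.range (s + 1), {ω | Y r ω = y r}).Nonempty := by
      rcases Set.eq_empty_or_nonempty (⋂ r ∈ Finset.range (s + 1), {ω | Y r ω = y r}) with h | h
      · exact absurd (by rw [h]; exact measure_empty) hpos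
      · exact h
    obtain ⟨ω0, hω0⟩ := hne
    have hyr : ∀ r ≤ s, y r = 0 := by
      intro r hr
      have hω0' := hω0
      simp only [Set.mem_iInter, Finset.mem_range, Set.mem_setOf_eq] at hω0'
      have h1 : Y r ω0 = y r := hω0' r (Nat.lt_succ_of_le hr)
      have h2 : Y s ω0 = 0 := hJA hω0
      have := hm ω0 r s hr
      omega
    have hJ : (⋂ r ∈ Finset.range (s + 1), {ω | Y r ω = y r}) = {ω | Y s ω = 0} := by
      ext ω
      simp only [Set.mem_iInter, Set.mem_setOf_eq, Finset.mem_range]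
      constructor
      · intro h
        have := h s (Nat.lt_succ_self s); omega
      · intro h r hr
        have := hm ω r s (Nat.lt_succ_iff.mp hr)
        rw [hyr r (Nat.lt_succ_iff.mp hr)]
        omega
    have hne0 : P {ω | Y s ω = 0} ≠ 0 := by rw [← hJ]; exact hpos
    have hnet : P {ω | Y s ω = 0} ≠ ⊤ := measure_ne_top P _
    rw [hsplit, hJ, condProb]
    rw [Set.inter_comm, mul_comm, ENNReal.div_mul_cancel hne0 hnet]
  · -- y s = 1
    have hJ1 : (⋂ r ∈ Finset.range (s + 1), {ω | Y r ω = y r}) ⊆ {ω | Y s ω = 1} := by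
      intro ω hω; exact hJA hω
    have hne1 : P {ω | Y s ω = 1} ≠ 0 := fun h =>
      hpos (le_antisymm (h ▸ measure_mono hJ1) zero_le)
    interval_cases h1 : y (s + 1)
    · -- y (s+1) = 0 : impossible transition 1 → 0; both sides are 0
      have hempty : {ω | Y (s + 1) ω = 0} ∩ {ω | Y s ω = 1} = ∅ := by
        ext ω
        simp only [Set.mem_inter_iff, Set.mem_setOf_eq, Set.mem_empty_iff_false, iff_false]
        rintro ⟨ha, hb⟩
        have := hm ω s (s + 1) (Nat.le_succ s)
        omega
      have hLHS : P (⋂ r ∈ Finset.range (s + 2), {ω | Y r ω = y r}) = 0 := by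
        rw [hsplit]
        refine le_antisymm ?_ zero_le
        calc P ({ω | Y (s + 1) ω = 0} ∩ ⋂ r ∈ Finset.range (s + 1), {ω | Y r ω = y r})
            ≤ P ({ω | Y (s + 1) ω = 0} ∩ {ω | Y s ω = 1}) :=
              measure_mono (Set.inter_subset_inter_right _ hJ1)
          _ = 0 := by rw [hempty, measure_empty]
      rw [hLHS, condProb, hempty, measure_empty, ENNReal.zero_div, mul_zero]
    · -- y (s+1) = 1 : {Y s = 1} ⊆ {Y (s+1) = 1}, conditional prob is 1
      have hsub : {ω | Y s ω = 1} ⊆ {ω | Y (s + 1) ω = 1} := by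
        intro ω hω
        have h2 := hm ω s (s + 1) (Nat.le_succ s)
        have h3 := hbin (s + 1) ω
        simp only [Set.mem_setOf_eq] at *
        omega
      have hinter : {ω | Y (s + 1) ω = 1} ∩ {ω | Y s ω = 1} = {ω | Y s ω = 1} :=
        Set.inter_eq_self_of_subset_right hsub
      have hJeq : (⋂ r ∈ Finset.range (s + 2), {ω | Y r ω = y r}) =
          ⋂ r ∈ Finset.range (s + 1), {ω | Y r ω = y r} := by
        rw [hsplit]
        exact Set.inter_eq_self_of_subset_right (fun ω hω => hsub (hJ1 hω))
      rw [hJeq, condProb, hinter, ENNReal.div_self hne1 (measure_ne_top P _), mul_one]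

/-- For a binary, pathwise-nondecreasing state-indicator process `Y`,
the path probability factorizes through one-step transition probabilities:
`P(Y_0 = y_0, …, Y_t = y_t) = P(Y_0 = y_0) · ∏_{s=1}^{t} P(Y_s = y_s | Y_{s-1} = y_{s-1})`. -/
theorem single_event_path_factorization
    {Ω : Type*} [MeasurableSpace Ω] (P : Measure Ω) [IsProbabilityMeasure P]
    (Y : ℕ → Ω → ℕ)
    (hbin : ∀ t ω, Y t ω ≤ 1)
    (hmono : ∀ ω, Monotone fun t => Y t ω)
    (t : ℕ)
    (y : ℕ → ℕ) (hy : ∀ s ≤ t, y s ≤ 1)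
    (hpos : ∀ s < t, P (⋂ r ∈ Finset.range (s + 1), {ω | Y r ω = y r}) ≠ 0) :
    P (⋂ s ∈ Finset.range (t + 1), {ω | Y s ω = y s}) =
      P {ω | Y 0 ω = y 0} *
        ∏ s ∈ Finset.Icc 1 t,
          condProb P {ω | Y s ω = y s} {ω | Y (s - 1) ω = y (s - 1)} := by
  induction t with
  | zero => simp
  | succ n ih =>
    have hih := ih (fun s hs => hy s (hs.trans (Nat.le_succ n)))
      (fun s hs => hpos s (hs.trans (Nat.lt_succ_self n)))
    have hstep := step_aux P Y hbin hmono n y (hy n (Nat.le_succ n)) (hy (n + 1) le_rfl)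
      (hpos n (Nat.lt_succ_self n))
    rw [Finset.prod_Icc_succ_top (Nat.le_add_left 1 n)]
    simp only [Nat.add_sub_cancel]
    rw [← mul_assoc, ← hih]
    exact hstep
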